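/- arXiv:1308.2620 — 5 statements merged into one kernel-verified Lean document; each statement's English description precedes it below -/
import Mathlib

section
/- Let f : ℝⁿ → ℝ be twice continuously differentiable on a convex box I, and suppose |∂²f/∂uᵢ∂uⱼ(u)| < Mᵢⱼ for all u ∈ I and all i, j. Define the diagonal matrix Q̄ with Q̄ᵢᵢ = Σⱼ Mᵢⱼ. Then for any u, v ∈ I, f(v) − f(u) ≤ ∇f(u)ᵀ(v − u) + ½ (v − u)ᵀ Q̄ (v − u). -/
open Set ContinuousLinearMap

/-- Symmetry of the second derivative for a function differentiable on a (possibly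
degenerate) box, in two coordinate directions where the box is nondegenerate. -/
lemma second_partial_symm {n : ℕ} (uL uU : Fin n → ℝ)
    (f : (Fin n → ℝ) → ℝ) (f' : (Fin n → ℝ) → (Fin n → ℝ) →L[ℝ] ℝ)
    (f'' : (Fin n → ℝ) → (Fin n → ℝ) →L[ℝ] (Fin n → ℝ) →L[ℝ] ℝ)
    (hdiff : ∀ u : Fin n → ℝ, (∀ i, uL i ≤ u i ∧ u i ≤ uU i) → HasFDerivAt f (f' u) u)
    (hdiff2 : ∀ u : Fin n → ℝ, (∀ i, uL i ≤ u i ∧ u i ≤ uU i) → HasFDerivAt f' (f'' u) u)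
    (w : Fin n → ℝ) (hw : ∀ i, uL i ≤ w i ∧ w i ≤ uU i)
    {i j : Fin n} (hij : i ≠ j) (hi : uL i < uU i) (hj : uL j < uU j) :
    f'' w (Pi.single i 1) (Pi.single j 1) = f'' w (Pi.single j 1) (Pi.single i 1) := by
  set e₁ : Fin n → ℝ := Pi.single i 1 with he₁
  set e₂ : Fin n → ℝ := Pi.single j 1 with he₂
  set L : ℝ × ℝ →L[ℝ] (Fin n → ℝ) :=
    (ContinuousLinearMap.fst ℝ ℝ ℝ).smulRight e₁ +
      (ContinuousLinearMap.snd ℝ ℝ ℝ).smulRight e₂ with hL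
  set ψ : ℝ × ℝ → (Fin n → ℝ) := fun p => w + L p with hψ
  set s₀ : Set (ℝ × ℝ) :=
    (Icc (uL i - w i) (uU i - w i)) ×ˢ (Icc (uL j - w j) (uU j - w j)) with hs₀
  have hLapp : ∀ p : ℝ × ℝ, L p = p.1 • e₁ + p.2 • e₂ := fun p => rfl
  have hψbox : ∀ p ∈ s₀, ∀ k, uL k ≤ ψ p k ∧ ψ p k ≤ uU k := by
    rintro ⟨a, b⟩ hp k
    obtain ⟨⟨ha1, ha2⟩, ⟨hb1, hb2⟩⟩ := hp
    have hval : ψ (a, b) k = w k + a * e₁ k + b * e₂ k := by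
      simp [hψ, hLapp, mul_comm]
      ring
    rw [hval, he₁, he₂]
    rcases eq_or_ne k i with rfl | hki
    · rw [Pi.single_eq_same, Pi.single_eq_of_ne hij]
      constructor <;> simp <;> linarith
    · rw [Pi.single_eq_of_ne hki]
      rcases eq_or_ne k j with rfl | hkj
      · rw [Pi.single_eq_same]
        have := hw k
        constructor <;> simp <;> linarith
      · rw [Pi.single_eq_of_ne hkj]
        have := hw k
        constructor <;> simp <;> linarith
  have s_conv : Convex ℝ s₀ := (convex_Icc _ _).prod (convex_Icc _ _)
  have hint : interior s₀ = (Ioo (uL i - w i) (uU i - w i)) ×ˢ (Ioo (uL j - w j) (uU j - w j)) := by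
    rw [hs₀, interior_prod_eq, interior_Icc, interior_Icc]
  have hne : (interior s₀).Nonempty := by
    rw [hint]
    exact (Set.nonempty_Ioo.2 (by linarith)).prod (Set.nonempty_Ioo.2 (by linarith))
  have x0s : ((0:ℝ), (0:ℝ)) ∈ s₀ := by
    constructor <;> constructor <;> simp <;> linarith [(hw i).1, (hw i).2, (hw j).1, (hw j).2]
  have hψderiv : ∀ p : ℝ × ℝ, HasFDerivAt ψ L p := fun p => (L.hasFDerivAt).const_add w
  set g' : ℝ × ℝ → (ℝ × ℝ) →L[ℝ] ℝ := fun p => (f' (ψ p)).comp L with hg'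
  have hf : ∀ p ∈ interior s₀, HasFDerivAt (fun p => f (ψ p)) (g' p) p := by
    intro p hp
    exact (hdiff (ψ p) (hψbox p (interior_subset hp))).comp p (hψderiv p)
  have hψ0 : ψ ((0:ℝ), (0:ℝ)) = w := by
    simp [hψ, hLapp]
  set P : ((Fin n → ℝ) →L[ℝ] ℝ) →L[ℝ] ((ℝ × ℝ) →L[ℝ] ℝ) :=
    (ContinuousLinearMap.compL ℝ (ℝ × ℝ) (Fin n → ℝ) ℝ).flip L with hP
  have hfd : HasFDerivAt (fun p => f' (ψ p)) ((f'' w).comp L) ((0:ℝ), (0:ℝ)) := by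
    have h : HasFDerivAt f' (f'' w) (ψ ((0:ℝ), (0:ℝ))) := by rw [hψ0]; exact hdiff2 w hw
    exact h.comp _ (hψderiv _)
  have hx : HasFDerivWithinAt g' (P.comp ((f'' w).comp L)) (interior s₀) ((0:ℝ), (0:ℝ)) := by
    have := (P.hasFDerivAt).comp ((0:ℝ), (0:ℝ)) hfd
    exact this.hasFDerivWithinAt
  have symm := s_conv.second_derivative_within_at_symmetric hne hf x0s hx
    ((1:ℝ), (0:ℝ)) ((0:ℝ), (1:ℝ))
  have hL10 : L ((1:ℝ), (0:ℝ)) = e₁ := by rw [hLapp]; simp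
  have hL01 : L ((0:ℝ), (1:ℝ)) = e₂ := by rw [hLapp]; simp
  simpa [hP, ContinuousLinearMap.comp_apply, ContinuousLinearMap.flip_apply,
    ContinuousLinearMap.compL_apply, hL10, hL01] using symm

/-- Quadratic upper bound on the evolution of an unknown function (Lemma 2). -/
theorem quadratic_upper_bound {n : ℕ} (uL uU : Fin n → ℝ)
    (f : (Fin n → ℝ) → ℝ) (f' : (Fin n → ℝ) → (Fin n → ℝ) →L[ℝ] ℝ)
    (f'' : (Fin n → ℝ) → (Fin n → ℝ) →L[ℝ] (Fin n → ℝ) →L[ℝ] ℝ)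
    (M : Fin n → Fin n → ℝ) (hM : ∀ i j, 0 < M i j)
    (hdiff : ∀ u : Fin n → ℝ, (∀ i, uL i ≤ u i ∧ u i ≤ uU i) → HasFDerivAt f (f' u) u)
    (hdiff2 : ∀ u : Fin n → ℝ, (∀ i, uL i ≤ u i ∧ u i ≤ uU i) → HasFDerivAt f' (f'' u) u)
    (hbound : ∀ u : Fin n → ℝ, (∀ i, uL i ≤ u i ∧ u i ≤ uU i) →
      ∀ i j, |f'' u (Pi.single i 1) (Pi.single j 1)| < M i j)
    (u v : Fin n → ℝ)
    (hu : ∀ i, uL i ≤ u i ∧ u i ≤ uU i) (hv : ∀ i, uL i ≤ v i ∧ v i ≤ uU i) :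
    f v - f u ≤ f' u (v - u) + (1/2) * ∑ i, (∑ j, M i j) * (v i - u i)^2 := by
  classical
  have hci : ∀ i, (v - u) i = v i - u i := fun i => rfl
  -- coordinates where v ≠ u are nondegenerate directions of the box
  have hactive : ∀ i : Fin n, v i - u i ≠ 0 → uL i < uU i := by
    intro i h
    have h1 := hu i; have h2 := hv i
    rcases lt_or_gt_of_ne (sub_ne_zero.1 h) with h3 | h3 <;> linarith [h1.1, h1.2, h2.1, h2.2]
  set B : ℝ := ∑ i, (∑ j, M i j) * (v i - u i)^2 with hBdef
  -- key quadratic form bound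
  have key : ∀ w : Fin n → ℝ, (∀ i, uL i ≤ w i ∧ w i ≤ uU i) →
      |f'' w (v - u) (v - u)| ≤ B := by
    intro w hw
    have hH := hbound w hw
    have hcsum : (v - u) = ∑ k, (v k - u k) • (Pi.single k (1:ℝ) : Fin n → ℝ) := by
      funext m
      simp [Finset.sum_apply, Pi.single_apply]
    have e1 : ∀ (A : (Fin n → ℝ) →L[ℝ] ℝ),
        A (v - u) = ∑ k, (v k - u k) * A (Pi.single k 1) := by
      intro A
      conv_lhs => rw [hcsum]
      rw [map_sum]
      simp
    have e2 : f'' w (v - u) = ∑ k, (v k - u k) • f'' w (Pi.single k 1) := by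
      conv_lhs => rw [hcsum]
      rw [map_sum]
      simp
    have expand : f'' w (v - u) (v - u) =
        ∑ i, ∑ j, (v i - u i) * ((v j - u j) * f'' w (Pi.single i 1) (Pi.single j 1)) := by
      rw [e2, ContinuousLinearMap.sum_apply]
      refine Finset.sum_congr rfl fun i _ => ?_
      rw [ContinuousLinearMap.smul_apply, smul_eq_mul, e1, Finset.mul_sum]
    rw [expand]
    calc |∑ i, ∑ j, (v i - u i) * ((v j - u j) * f'' w (Pi.single i 1) (Pi.single j 1))|
        ≤ ∑ i, ∑ j, |(v i - u i) * ((v j - u j) * f'' w (Pi.single i 1) (Pi.single j 1))| := by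
          refine (Finset.abs_sum_le_sum_abs _ _).trans ?_
          exact Finset.sum_le_sum fun i _ => Finset.abs_sum_le_sum_abs _ _
      _ ≤ ∑ i, ∑ j, (M i j * (v i - u i)^2 / 2 + M j i * (v j - u j)^2 / 2) := by
          refine Finset.sum_le_sum fun i _ => Finset.sum_le_sum fun j _ => ?_
          set H := f'' w (Pi.single i 1) (Pi.single j 1) with hHdef
          rcases eq_or_ne (v i - u i) 0 with hzi | hzi
          · rw [hzi]
            have := hM i j; have := hM j i
            simp only [zero_mul, abs_zero]
            positivity
          rcases eq_or_ne (v j - u j) 0 with hzj | hzj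
          · rw [hzj]
            have := hM i j; have := hM j i
            simp only [mul_zero, zero_mul, abs_zero]
            positivity
          have hMij : |H| ≤ M i j := (hH i j).le
          have hMji : |H| ≤ M j i := by
            rcases eq_or_ne i j with rfl | hij
            · exact (hH i i).le
            · have hsym := second_partial_symm uL uU f f' f'' hdiff hdiff2 w hw hij
                (hactive i hzi) (hactive j hzj)
              rw [hHdef, hsym]
              exact (hH j i).le
          have habs : |(v i - u i) * ((v j - u j) * H)| = |v i - u i| * (|v j - u j| * |H|) := by
            rw [abs_mul, abs_mul]
          rw [habs]
          have h0 : (0:ℝ) ≤ |H| := abs_nonneg _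
          nlinarith [sq_nonneg (|v i - u i| - |v j - u j|), sq_abs (v i - u i),
            sq_abs (v j - u j), abs_nonneg (v i - u i), abs_nonneg (v j - u j),
            mul_nonneg (sub_nonneg.2 hMij) (sq_nonneg (v i - u i)),
            mul_nonneg (sub_nonneg.2 hMji) (sq_nonneg (v j - u j))]
      _ = B := by
          rw [hBdef]
          have hsplit : ∀ i : Fin n, ∑ j, (M i j * (v i - u i)^2 / 2 + M j i * (v j - u j)^2 / 2)
              = (∑ j, M i j * (v i - u i)^2 / 2) + ∑ j, M j i * (v j - u j)^2 / 2 :=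
            fun i => Finset.sum_add_distrib
          simp only [hsplit]
          rw [Finset.sum_add_distrib,
            Finset.sum_comm (f := fun i j => M j i * (v j - u j)^2 / 2)]
          rw [← Finset.sum_add_distrib]
          refine Finset.sum_congr rfl fun i _ => ?_
          rw [Finset.sum_mul, ← Finset.sum_add_distrib]
          refine Finset.sum_congr rfl fun j _ => ?_
          ring
  have hB0 : 0 ≤ B := Finset.sum_nonneg fun i _ =>
    mul_nonneg (Finset.sum_nonneg fun j _ => (hM i j).le) (sq_nonneg _)
  -- the segment from u to v
  set γ : ℝ → (Fin n → ℝ) := fun t => u + t • (v - u) with hγdef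
  have hγval : ∀ t : ℝ, ∀ i, γ t i = u i + t * (v i - u i) := fun t i => rfl
  have hγ0 : γ 0 = u := by funext i; rw [hγval]; ring
  have hγ1 : γ 1 = v := by funext i; rw [hγval]; ring
  have hγmem : ∀ t ∈ Icc (0:ℝ) 1, ∀ i, uL i ≤ γ t i ∧ γ t i ≤ uU i := by
    intro t ht i
    have h1 := hu i; have h2 := hv i
    rw [hγval]
    constructor <;> nlinarith [ht.1, ht.2, h1.1, h1.2, h2.1, h2.2]
  have hγd : ∀ t : ℝ, HasDerivAt γ (v - u) t := by
    intro t
    have h1 : HasDerivAt (fun s : ℝ => s • (v - u)) ((1:ℝ) • (v - u)) t :=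
      (hasDerivAt_id t).smul_const (v - u)
    have h2 := h1.const_add u
    rw [one_smul] at h2
    exact h2
  have hg : ∀ t ∈ Icc (0:ℝ) 1, HasDerivAt (fun s => f (γ s)) (f' (γ t) (v - u)) t :=
    fun t ht => (hdiff (γ t) (hγmem t ht)).comp_hasDerivAt t (hγd t)
  have hh : ∀ t ∈ Icc (0:ℝ) 1,
      HasDerivAt (fun s => f' (γ s) (v - u)) (f'' (γ t) (v - u) (v - u)) t := by
    intro t ht
    have h1 : HasDerivAt (fun s => f' (γ s)) (f'' (γ t) (v - u)) t :=
      (hdiff2 (γ t) (hγmem t ht)).comp_hasDerivAt t (hγd t)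
    exact ((ContinuousLinearMap.apply ℝ ℝ (v - u)).hasFDerivAt).comp_hasDerivAt t h1
  -- mean value bound on the derivative term
  have mvt : ∀ t ∈ Icc (0:ℝ) 1, ‖f' (γ t) (v - u) - f' (γ 0) (v - u)‖ ≤ B * (t - 0) := by
    refine norm_image_sub_le_of_norm_deriv_le_segment'
      (f' := fun t => f'' (γ t) (v - u) (v - u))
      (fun t ht => (hh t ht).hasDerivWithinAt) (fun t ht => ?_)
    rw [Real.norm_eq_abs]
    exact key (γ t) (hγmem t (Ico_subset_Icc_self ht))
  -- the auxiliary function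
  set φ : ℝ → ℝ := fun t => f (γ t) - t * (f' u (v - u)) - B / 2 * t^2 with hφdef
  have hφd : ∀ t ∈ Icc (0:ℝ) 1,
      HasDerivAt φ (f' (γ t) (v - u) - f' u (v - u) - B * t) t := by
    intro t ht
    have h1 : HasDerivAt (fun s : ℝ => s * (f' u (v - u))) (f' u (v - u)) t := by
      simpa using (hasDerivAt_id t).mul_const (f' u (v - u))
    have h2 : HasDerivAt (fun s : ℝ => B / 2 * s^2) (B * t) t := by
      have := (hasDerivAt_pow 2 t).const_mul (B / 2)
      refine this.congr_deriv ?_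
      norm_num
      ring
    exact ((hg t ht).sub h1).sub h2
  have hcont : ContinuousOn φ (Icc 0 1) :=
    fun t ht => ((hφd t ht).continuousAt).continuousWithinAt
  have hdiffInt : DifferentiableOn ℝ φ (interior (Icc (0:ℝ) 1)) := by
    rw [interior_Icc]
    exact fun t ht => ((hφd t (Ioo_subset_Icc_self ht)).differentiableAt).differentiableWithinAt
  have hderiv_np : ∀ t ∈ interior (Icc (0:ℝ) 1), deriv φ t ≤ 0 := by
    rw [interior_Icc]
    intro t ht
    have ht' : t ∈ Icc (0:ℝ) 1 := Ioo_subset_Icc_self ht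
    rw [(hφd t ht').deriv]
    have hm := mvt t ht'
    rw [Real.norm_eq_abs, hγ0] at hm
    have := (abs_le.1 hm).2
    linarith
  have hanti : AntitoneOn φ (Icc 0 1) :=
    antitoneOn_of_deriv_nonpos (convex_Icc 0 1) hcont hdiffInt hderiv_np
  have hfin : φ 1 ≤ φ 0 :=
    hanti (left_mem_Icc.2 zero_le_one) (right_mem_Icc.2 zero_le_one) zero_le_one
  rw [hφdef] at hfin
  simp only [hγ0, hγ1, one_mul, one_pow, mul_one, mul_zero, zero_mul, sub_zero] at hfin
  linarith
end

section
/- Let g₁,…,g_m : ℝⁿ → ℝ be continuously differentiable functions with strict Lipschitz bounds |∂gⱼ/∂uᵢ(u)| < κⱼᵢ on a box I, and suppose g_j(u_k) < 0 for all j at a point u_k ∈ I. Let u*_{k+1} ∈ I with u*_{k+1} ≠ u_k, and set u_{k+1} = u_k + K_k(u*_{k+1} − u_k) with 0 ≤ K_k ≤ min_j [ −g_j(u_k) / Σᵢ κⱼᵢ |u*_{k+1,i} − u_{k,i}| ]. Then g_j(u_{k+1}) < 0 for all j (with equality u_{k+1} = u_k when K_k = 0, in which case the constraints stay at their previous strictly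 negative values). -/
/-- Sufficient condition for feasibility via the adaptive input filter (Theorem 2). -/
theorem adaptive_filter_feasibility {n m : ℕ} (uL uU : Fin n → ℝ)
    (g : Fin m → (Fin n → ℝ) → ℝ)
    (g' : Fin m → (Fin n → ℝ) → (Fin n → ℝ) →L[ℝ] ℝ)
    (κ : Fin m → Fin n → ℝ) (hκ : ∀ j i, 0 < κ j i)
    (hdiff : ∀ j, ∀ u : Fin n → ℝ, (∀ i, uL i ≤ u i ∧ u i ≤ uU i) →
      HasFDerivAt (g j) (g' j u) u)
    (hbound : ∀ j, ∀ u : Fin n → ℝ, (∀ i, uL i ≤ u i ∧ u i ≤ uU i) →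
      ∀ i, |g' j u (Pi.single i 1)| < κ j i)
    (uk ustar : Fin n → ℝ)
    (huk : ∀ i, uL i ≤ uk i ∧ uk i ≤ uU i)
    (hustar : ∀ i, uL i ≤ ustar i ∧ ustar i ≤ uU i)
    (hne : ustar ≠ uk)
    (hfeas : ∀ j, g j uk < 0)
    (K : ℝ) (hK0 : 0 ≤ K) (hK1 : K ≤ 1)
    (hKgain : ∀ j, K ≤ (-(g j uk)) / (∑ i, κ j i * |ustar i - uk i|)) :
    ∀ j, g j (uk + K • (ustar - uk)) < 0 := by
  intro j
  rcases eq_or_lt_of_le hK0 with hK0' | hKpos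
  · have : K • (ustar - uk) = 0 := by rw [← hK0']; simp
    simpa [this] using hfeas j
  -- some coordinate differs
  obtain ⟨i0, hi0⟩ : ∃ i, ustar i - uk i ≠ 0 := by
    by_contra h
    push_neg at h
    exact hne (funext fun i => by have := h i; linarith [sub_eq_zero.mp (this)])
  set w : Fin n → ℝ := K • (ustar - uk) with hw
  have hwne : w ≠ 0 := by
    intro h
    have := congrFun h i0
    simp only [hw, Pi.smul_apply, Pi.sub_apply, Pi.zero_apply, smul_eq_mul,
      mul_eq_zero] at this
    rcases this with h | h
    · exact hKpos.ne' h
    · exact hi0 h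
  -- membership of segment points in the box
  have hseg : ∀ t : ℝ, t ∈ Set.Icc (0:ℝ) 1 → ∀ i, uL i ≤ (uk + t • w) i ∧ (uk + t • w) i ≤ uU i := by
    intro t ht i
    have h1 : (uk + t • w) i = uk i + (t * K) * (ustar i - uk i) := by
      simp only [hw, Pi.add_apply, Pi.smul_apply, Pi.sub_apply, smul_eq_mul]
      ring
    have htK0 : 0 ≤ t * K := mul_nonneg ht.1 hK0
    have htK1 : t * K ≤ 1 := by
      calc t * K ≤ 1 * 1 := mul_le_mul ht.2 hK1 hK0 zero_le_one
        _ = 1 := one_mul 1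
    rw [h1]
    constructor
    · rcases le_or_gt (uk i) (ustar i) with h | h
      · nlinarith [(huk i).1]
      · nlinarith [(hustar i).1]
    · rcases le_or_gt (uk i) (ustar i) with h | h
      · nlinarith [(hustar i).2]
      · nlinarith [(huk i).2]
  -- pointwise strict bound on directional derivative along w
  have hC : ∀ u : Fin n → ℝ, (∀ i, uL i ≤ u i ∧ u i ≤ uU i) →
      g' j u w < ∑ i, κ j i * |w i| := by
    intro u hu
    have hdecomp : (w : Fin n → ℝ) = ∑ i, w i • (Pi.single i 1 : Fin n → ℝ) := by
      funext k
      simp [Finset.sum_apply, Pi.single_apply, mul_ite]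
    have hmap : g' j u w = ∑ i, w i * g' j u (Pi.single i 1) := by
      conv_lhs => rw [hdecomp]
      simp [map_sum]
    rw [hmap]
    have hle : ∀ i, w i * g' j u (Pi.single i 1) ≤ |w i| * κ j i := by
      intro i
      calc w i * g' j u (Pi.single i 1) ≤ |w i * g' j u (Pi.single i 1)| := le_abs_self _
        _ = |w i| * |g' j u (Pi.single i 1)| := abs_mul _ _
        _ ≤ |w i| * κ j i := mul_le_mul_of_nonneg_left (le_of_lt (hbound j u hu i)) (abs_nonneg _)
    obtain ⟨i1, hi1⟩ : ∃ i, w i ≠ 0 := by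
      by_contra h
      push_neg at h
      exact hwne (funext h)
    have hstrict : w i1 * g' j u (Pi.single i1 1) < κ j i1 * |w i1| := by
      have h1 : |w i1| > 0 := abs_pos.mpr hi1
      calc w i1 * g' j u (Pi.single i1 1) ≤ |w i1| * |g' j u (Pi.single i1 1)| := by
            calc _ ≤ |w i1 * g' j u (Pi.single i1 1)| := le_abs_self _
              _ = _ := abs_mul _ _
        _ < |w i1| * κ j i1 := by
            exact (mul_lt_mul_iff_right₀ h1).mpr (hbound j u hu i1)
        _ = κ j i1 * |w i1| := mul_comm _ _
    refine Finset.sum_lt_sum (fun i _ => ?_) ⟨i1, Finset.mem_univ i1, hstrict⟩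
    calc w i * g' j u (Pi.single i 1) ≤ |w i| * κ j i := hle i
      _ = κ j i * |w i| := mul_comm _ _
  -- MVT along the segment
  set φ : ℝ → ℝ := fun t => g j (uk + t • w) with hφ
  have hderiv : ∀ t : ℝ, t ∈ Set.Icc (0:ℝ) 1 → HasDerivAt φ (g' j (uk + t • w) w) t := by
    intro t ht
    have hcurve : HasDerivAt (fun t : ℝ => uk + t • w) w t := by
      have h1 : HasDerivAt (fun t : ℝ => t • w) ((1:ℝ) • w) t :=
        (hasDerivAt_id t).smul_const w
      simpa using h1.const_add uk
    exact (hdiff j _ (hseg t ht)).comp_hasDerivAt t hcurve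
  obtain ⟨c, hc, hcval⟩ := exists_hasDerivAt_eq_slope φ (fun t => g' j (uk + t • w) w)
    (by norm_num : (0:ℝ) < 1)
    (fun t ht => (hderiv t ht).continuousAt.continuousWithinAt)
    (fun t ht => hderiv t (Set.mem_Icc_of_Ioo ht))
  have hcIcc : c ∈ Set.Icc (0:ℝ) 1 := Set.mem_Icc_of_Ioo hc
  have hkey : g j (uk + w) - g j uk < ∑ i, κ j i * |w i| := by
    have h0 : φ 0 = g j uk := by simp [hφ]
    have h1 : φ 1 = g j (uk + w) := by simp [hφ]
    have := hC _ (hseg c hcIcc)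
    rw [hcval] at this
    simp only [h0, h1, div_one, sub_zero] at this
    linarith [this]
  -- combine with gain bound
  have hsum : (∑ i, κ j i * |w i|) = K * ∑ i, κ j i * |ustar i - uk i| := by
    rw [Finset.mul_sum]
    refine Finset.sum_congr rfl fun i _ => ?_
    simp [hw, Pi.smul_apply, abs_mul, abs_of_nonneg hK0]
    ring
  have hSpos : 0 < ∑ i, κ j i * |ustar i - uk i| := by
    have hterm : ∀ i, 0 ≤ κ j i * |ustar i - uk i| :=
      fun i => mul_nonneg (hκ j i).le (abs_nonneg _)
    have hi0pos : 0 < κ j i0 * |ustar i0 - uk i0| :=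
      mul_pos (hκ j i0) (abs_pos.mpr hi0)
    exact Finset.sum_pos' (fun i _ => hterm i) ⟨i0, Finset.mem_univ i0, hi0pos⟩
  have hKS : K * (∑ i, κ j i * |ustar i - uk i|) ≤ -(g j uk) := by
    calc K * (∑ i, κ j i * |ustar i - uk i|)
        ≤ ((-(g j uk)) / (∑ i, κ j i * |ustar i - uk i|)) * (∑ i, κ j i * |ustar i - uk i|) :=
          mul_le_mul_of_nonneg_right (hKgain j) hSpos.le
      _ = -(g j uk) := div_mul_cancel₀ _ hSpos.ne'
  have hfin : g j (uk + w) < g j uk + K * ∑ i, κ j i * |ustar i - uk i| := by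
    have h2 := hkey
    rw [hsum] at h2
    linarith
  linarith
end

section
/- Let g : ℝⁿ → ℝ have nonstrict Lipschitz constants κ̃ᵢ and strict Lipschitz constants κᵢ on a box I with κ̃ᵢ ≤ γ κᵢ for some γ ∈ (0,1). Suppose the step u_{k+1} − u_k satisfies Σᵢ κᵢ |u_{k+1,i} − u_{k,i}| ≤ −g(u_k) with g(u_k) < 0. Then g(u_{k+1}) ≤ (1 − γ) g(u_k), i.e., −g(u_{k+1}) ≥ (1 − γ)(−g(u_k)). -/
/-- A constraint value can shrink toward 0 by at most the factor (1 − γ) per iteration. -/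
theorem constraint_shrink_factor {n : ℕ} (uL uU : Fin n → ℝ)
    (g : (Fin n → ℝ) → ℝ)
    (κt κ : Fin n → ℝ) (γ : ℝ) (hγ0 : 0 < γ) (hγ1 : γ < 1)
    (hκt : ∀ i, κt i ≤ γ * κ i)
    (hLip : ∀ u v : Fin n → ℝ, (∀ i, uL i ≤ u i ∧ u i ≤ uU i) →
      (∀ i, uL i ≤ v i ∧ v i ≤ uU i) →
      g v - g u ≤ ∑ i, κt i * |v i - u i|)
    (uk uk1 : Fin n → ℝ)
    (huk : ∀ i, uL i ≤ uk i ∧ uk i ≤ uU i)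
    (huk1 : ∀ i, uL i ≤ uk1 i ∧ uk1 i ≤ uU i)
    (hgneg : g uk < 0)
    (hstep : ∑ i, κ i * |uk1 i - uk i| ≤ -(g uk)) :
    g uk1 ≤ (1 - γ) * g uk := by
  have h1 : g uk1 - g uk ≤ ∑ i, κt i * |uk1 i - uk i| := hLip uk uk1 huk huk1
  have h2 : ∑ i, κt i * |uk1 i - uk i| ≤ γ * ∑ i, κ i * |uk1 i - uk i| := by
    rw [Finset.mul_sum]
    apply Finset.sum_le_sum
    intro i _
    rw [← mul_assoc]
    exact mul_le_mul_of_nonneg_right (hκt i) (abs_nonneg _)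
  have h3 : γ * ∑ i, κ i * |uk1 i - uk i| ≤ γ * (-(g uk)) :=
    mul_le_mul_of_nonneg_left hstep hγ0.le
  nlinarith
end

section
/- Let g : ℝⁿ → ℝ satisfy the quadratic upper bound g(v) − g(u) ≤ ∇g(u)ᵀ(v − u) + ½(v − u)ᵀ Q̄ (v − u) for all u, v in the box I with Q̄ ≻ 0, and suppose ∇g(u_k)ᵀ(u*_{k+1} − u_k) ≤ −δ with δ > 0 and u_k, u*_{k+1} ∈ I. Define K_ε = 2δ / ((uᵁ − uᴸ)ᵀ Q̄ (uᵁ − uᴸ)). Then K_ε ≤ −2 ∇g(u_k)ᵀ(u*_{k+1} − u_k) / ((u*_{k+1} − u_k)ᵀ Q̄ (u*_{k+1} − u_k)), and consequently any filter gain K with 0 < K < K_ε yields g(u_k + K(u*_{k+1} − u_k)) < g(u_k). -/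
/-- An algorithm-independent minimal descent gain `K_ε` for an ε-active constraint. -/
theorem minimal_descent_gain {n : ℕ} (uL uU : Fin n → ℝ)
    (g : (Fin n → ℝ) → ℝ)
    (Gg : (Fin n → ℝ) → (Fin n → ℝ))   -- gradient of g
    (Qd : Fin n → ℝ) (hQd : ∀ i, 0 < Qd i)   -- diagonal Q̄ ≻ 0
    (hquad : ∀ u v : Fin n → ℝ, (∀ i, uL i ≤ u i ∧ u i ≤ uU i) →
      (∀ i, uL i ≤ v i ∧ v i ≤ uU i) →
      g v - g u ≤ (∑ i, Gg u i * (v i - u i)) + (1/2) * ∑ i, Qd i * (v i - u i)^2)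
    (uk ustar : Fin n → ℝ)
    (huk : ∀ i, uL i ≤ uk i ∧ uk i ≤ uU i)
    (hustar : ∀ i, uL i ≤ ustar i ∧ ustar i ≤ uU i)
    (δ : ℝ) (hδ : 0 < δ)
    (hdesc : ∑ i, Gg uk i * (ustar i - uk i) ≤ -δ)
    (Keps : ℝ) (hKeps : Keps = 2 * δ / (∑ i, Qd i * (uU i - uL i)^2)) :
    Keps ≤ -2 * (∑ i, Gg uk i * (ustar i - uk i)) /
        (∑ i, Qd i * (ustar i - uk i)^2) ∧
    ∀ K : ℝ, 0 < K → K < Keps → K ≤ 1 →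
      g (uk + K • (ustar - uk)) < g uk := by
  set S := ∑ i, Gg uk i * (ustar i - uk i) with hS
  set D := ∑ i, Qd i * (ustar i - uk i)^2 with hD
  set Dm := ∑ i, Qd i * (uU i - uL i)^2 with hDm
  -- there is a coordinate where ustar ≠ uk
  have hne : ∃ i, ustar i ≠ uk i := by
    by_contra h
    push_neg at h
    have : S = 0 := by
      rw [hS]
      apply Finset.sum_eq_zero
      intro i _
      rw [h i]; ring
    linarith
  obtain ⟨j, hj⟩ := hne
  have hDpos : 0 < D := by
    rw [hD]
    apply Finset.sum_pos' (fun i _ => mul_nonneg (hQd i).le (sq_nonneg _))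
    exact ⟨j, Finset.mem_univ j, by
      have h0 : (ustar j - uk j) ≠ 0 := sub_ne_zero.mpr hj
      exact mul_pos (hQd j) (by positivity)⟩
  have hDDm : D ≤ Dm := by
    apply Finset.sum_le_sum
    intro i _
    have h1 := huk i
    have h2 := hustar i
    have : (ustar i - uk i)^2 ≤ (uU i - uL i)^2 := by
      apply sq_le_sq' <;> linarith
    nlinarith [(hQd i).le]
  have hDmpos : 0 < Dm := lt_of_lt_of_le hDpos hDDm
  have hfirst : Keps ≤ -2 * S / D := by
    rw [hKeps]
    apply div_le_div₀ (by linarith) (by linarith) hDpos hDDm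
  refine ⟨hfirst, ?_⟩
  intro K hK0 hKKeps hK1
  have hKlt : K * D < 2 * δ := by
    have h2 : K < 2 * δ / D := lt_of_lt_of_le hKKeps (by
      rw [hKeps]
      apply div_le_div_of_nonneg_left (by linarith) hDpos hDDm)
    exact (lt_div_iff₀ hDpos).mp h2
  set v : Fin n → ℝ := uk + K • (ustar - uk) with hv
  have hvbox : ∀ i, uL i ≤ v i ∧ v i ≤ uU i := by
    intro i
    have h1 := huk i
    have h2 := hustar i
    have hvi : v i = uk i + K * (ustar i - uk i) := by simp [hv]
    constructor <;> rw [hvi] <;> nlinarith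
  have hq := hquad uk v huk hvbox
  have e1 : ∑ i, Gg uk i * (v i - uk i) = K * S := by
    rw [hS, Finset.mul_sum]
    apply Finset.sum_congr rfl
    intro i _
    simp [hv]; ring
  have e2 : ∑ i, Qd i * (v i - uk i)^2 = K^2 * D := by
    rw [hD, Finset.mul_sum]
    apply Finset.sum_congr rfl
    intro i _
    simp [hv]; ring
  rw [e1, e2] at hq
  have hKS : K * S ≤ K * (-δ) := by
    apply mul_le_mul_of_nonneg_left hdesc hK0.le
  nlinarith
end

section
/- Let φ : ℝⁿ → ℝ satisfy the quadratic upper bound φ(v) − φ(u) ≤ ∇φ(u)ᵀ(v − u) + ½(v − u)ᵀ Q̄ (v − u) with Q̄ ≻ 0 on a box I. Suppose at iteration k: ∇φ(u_k)ᵀ(u*_{k+1} − u_k) ≤ −δ_φ with δ_φ > 0, and the gain satisfies 0 < K_min ≤ K_k ≤ −2∇φ(u_k)ᵀ(u*_{k+1} − u_k)/((u*_{k+1} − u_k)ᵀ Q̄ (u*_{k+1} − u_k)) − K_min, with u_k, u*_{k+1} ∈ I. Then φ(u_{k+1}) − φ(u_k) ≤ −K_min δ_φ + (K_min²/2)(uᵁ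 − uᴸ)ᵀ Q̄ (uᵁ − uᴸ), and this bound is strictly negative whenever K_min < 2δ_φ/((uᵁ − uᴸ)ᵀ Q̄ (uᵁ − uᴸ)). -/
/-- Minimal cost decrease between iterations (Lemma 4). -/
theorem minimal_cost_decrease {n : ℕ} (uL uU : Fin n → ℝ)
    (φ : (Fin n → ℝ) → ℝ)
    (Gφ : Fin n → ℝ)   -- Gφ = ∇φ(u_k)
    (Qd : Fin n → ℝ) (hQd : ∀ i, 0 < Qd i)   -- diagonal Q̄ ≻ 0
    (uk ustar : Fin n → ℝ)
    (huk : ∀ i, uL i ≤ uk i ∧ uk i ≤ uU i)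
    (hustar : ∀ i, uL i ≤ ustar i ∧ ustar i ≤ uU i)
    (hquad : ∀ v : Fin n → ℝ, (∀ i, uL i ≤ v i ∧ v i ≤ uU i) →
      φ v - φ uk ≤ (∑ i, Gφ i * (v i - uk i)) + (1/2) * ∑ i, Qd i * (v i - uk i)^2)
    (δφ : ℝ) (hδφ : 0 < δφ)
    (hdesc : ∑ i, Gφ i * (ustar i - uk i) ≤ -δφ)
    (K Kmin : ℝ) (hKmin : 0 < Kmin) (hKlb : Kmin ≤ K) (hK1 : K ≤ 1)
    (hKub : K ≤ -2 * (∑ i, Gφ i * (ustar i - uk i)) /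
        (∑ i, Qd i * (ustar i - uk i)^2) - Kmin) :
    φ (uk + K • (ustar - uk)) - φ uk ≤
        -(Kmin * δφ) + (Kmin^2 / 2) * ∑ i, Qd i * (uU i - uL i)^2 ∧
    (Kmin < 2 * δφ / (∑ i, Qd i * (uU i - uL i)^2) →
      -(Kmin * δφ) + (Kmin^2 / 2) * ∑ i, Qd i * (uU i - uL i)^2 < 0) := by
  set b := ∑ i, Gφ i * (ustar i - uk i) with hb
  set c := ∑ i, Qd i * (ustar i - uk i)^2 with hc
  set D := ∑ i, Qd i * (uU i - uL i)^2 with hD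
  have hc0 : 0 ≤ c := Finset.sum_nonneg fun i _ =>
    mul_nonneg (hQd i).le (sq_nonneg _)
  have hD0 : 0 ≤ D := Finset.sum_nonneg fun i _ =>
    mul_nonneg (hQd i).le (sq_nonneg _)
  have hcD : c ≤ D := by
    apply Finset.sum_le_sum
    intro i _
    have h1 := (huk i).1; have h2 := (huk i).2
    have h3 := (hustar i).1; have h4 := (hustar i).2
    have : (ustar i - uk i)^2 ≤ (uU i - uL i)^2 := by
      apply sq_le_sq' <;> linarith
    exact mul_le_mul_of_nonneg_left this (hQd i).le
  have hcpos : 0 < c := by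
    rcases eq_or_lt_of_le hc0 with h | h
    · exfalso
      rw [← h] at hKub
      simp at hKub
      linarith
    · exact h
  -- box membership
  have hbox : ∀ i, uL i ≤ (uk + K • (ustar - uk)) i ∧
      (uk + K • (ustar - uk)) i ≤ uU i := by
    intro i
    have h1 := (huk i).1; have h2 := (huk i).2
    have h3 := (hustar i).1; have h4 := (hustar i).2
    have : (uk + K • (ustar - uk)) i = uk i + K * (ustar i - uk i) := by
      simp [Pi.add_apply, Pi.smul_apply]
    rw [this]
    constructor <;> nlinarith
  have hq := hquad _ hbox
  have hv : ∀ i, (uk + K • (ustar - uk)) i - uk i = K * (ustar i - uk i) := by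
    intro i; simp [Pi.add_apply, Pi.smul_apply]
  have hsum1 : ∑ i, Gφ i * ((uk + K • (ustar - uk)) i - uk i) = K * b := by
    rw [hb, Finset.mul_sum]
    exact Finset.sum_congr rfl fun i _ => by rw [hv i]; ring
  have hsum2 : ∑ i, Qd i * ((uk + K • (ustar - uk)) i - uk i)^2 = K^2 * c := by
    rw [hc, Finset.mul_sum]
    exact Finset.sum_congr rfl fun i _ => by rw [hv i]; ring
  rw [hsum1, hsum2] at hq
  -- K + Kmin ≤ -2b/c  ⟹  (K+Kmin)*c ≤ -2b
  have hK2 : (K + Kmin) * c ≤ -2 * b := by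
    have := hKub
    have h := (le_div_iff₀ hcpos).mp (by linarith : K + Kmin ≤ -2 * b / c)
    linarith
  have hmain : K * b + K^2 / 2 * c ≤ Kmin * b + Kmin^2 / 2 * c := by
    nlinarith [mul_nonneg (sub_nonneg.mpr hKlb) hc0]
  constructor
  · have : Kmin * b ≤ -(Kmin * δφ) := by nlinarith
    have hc2 : Kmin^2 / 2 * c ≤ Kmin^2 / 2 * D :=
      mul_le_mul_of_nonneg_left hcD (by positivity)
    calc φ (uk + K • (ustar - uk)) - φ uk ≤ K * b + 1/2 * (K^2 * c) := hq
      _ = K * b + K^2/2 * c := by ring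
      _ ≤ Kmin * b + Kmin^2/2 * c := hmain
      _ ≤ -(Kmin * δφ) + Kmin^2/2 * D := by linarith
  · intro hlt
    rcases eq_or_lt_of_le hD0 with h | h
    · rw [← h] at hlt; simp at hlt; linarith
    · have := (lt_div_iff₀ h).mp hlt
      nlinarith
end
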